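/- Let X be a finite set and f, g : X → X bijections with f ∘ g = g ∘ f, and let G be the group presented by generating set X with relations x·y = g(y)·f(x) for all x, y ∈ X (the structure group of the not-necessarily-involutive permutation solution S(x,y) = (g(y), f(x))). Let X' = X/≡, where x ≡ x' iff (f ∘ g)^k(x) = x' for some k ≥ 0, and let G' be the group presented by generating set X' with relations [x]·[y] = [g(y)]·[f(x)] for all [x],[y] ∈ X' (the structure group of the induced involutive permutation solution S'([x],[y]) = ([g(y)],[f(x)])). Then the quotient map x ↦ [x] on generators extends to a group isomorphism G ≅ G'. -/

import Mathlib

namespace YBE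

/-- `(X,S)` is non-degenerate: all the maps `g_x = y ↦ S(x,y).1` and
`f_y = x ↦ S(x,y).2` are bijective. -/
def Nondegenerate {X : Type*} (S : X × X → X × X) : Prop :=
  (∀ x : X, Function.Bijective fun y => (S (x, y)).1) ∧
  (∀ y : X, Function.Bijective fun x => (S (x, y)).2)

/-- `(X,S)` is involutive: `S ∘ S = id`. -/
def InvolutiveSol {X : Type*} (S : X × X → X × X) : Prop := S ∘ S = id

/-- `S¹² = S × id` on `X × X × X`. -/
def S12 {X : Type*} (S : X × X → X × X) : X × X × X → X × X × X :=
  fun p => ((S (p.1, p.2.1)).1, (S (p.1, p.2.1)).2, p.2.2)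

/-- `S²³ = id × S` on `X × X × X`. -/
def S23 {X : Type*} (S : X × X → X × X) : X × X × X → X × X × X :=
  fun p => (p.1, S (p.2.1, p.2.2))

/-- `(X,S)` is braided: `S¹² ∘ S²³ ∘ S¹² = S²³ ∘ S¹² ∘ S²³`. -/
def BraidedSol {X : Type*} (S : X × X → X × X) : Prop :=
  S12 S ∘ S23 S ∘ S12 S = S23 S ∘ S12 S ∘ S23 S

/-- The map `g_x : y ↦ S(x,y).1`. -/
def gmap {X : Type*} (S : X × X → X × X) (x : X) : X → X := fun y => (S (x, y)).1

/-- The map `f_y : x ↦ S(x,y).2`. -/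
def fmap {X : Type*} (S : X × X → X × X) (y : X) : X → X := fun x => (S (x, y)).2

/-- The inverse `g_x⁻¹` of the (bijective) map `g_x`. -/
noncomputable def ginv {X : Type*} [Nonempty X] (S : X × X → X × X) (x : X) : X → X :=
  Function.invFun (gmap S x)

/-- The inverse `f_y⁻¹` of the (bijective) map `f_y`. -/
noncomputable def finv {X : Type*} [Nonempty X] (S : X × X → X × X) (y : X) : X → X :=
  Function.invFun (fmap S y)

/-- The defining relations of the structure monoid: `x·y = t·z` whenever `S(x,y) = (t,z)`. -/
def ybRel {X : Type*} (S : X × X → X × X) : FreeMonoid X → FreeMonoid X → Prop :=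
  fun a b => ∃ x y : X, a = FreeMonoid.of x * FreeMonoid.of y ∧
    b = FreeMonoid.of (S (x, y)).1 * FreeMonoid.of (S (x, y)).2

/-- The structure monoid of `(X,S)`: the monoid presented by generating set `X` and
relations `x·y = t·z` for each `x,y,t,z` with `S(x,y) = (t,z)`. -/
abbrev StructureMonoid {X : Type*} (S : X × X → X × X) : Type _ :=
  (conGen (ybRel S)).Quotient

/-- The image in the structure monoid of a generator `x ∈ X`. -/
def smi {X : Type*} (S : X × X → X × X) (x : X) : StructureMonoid S :=
  (conGen (ybRel S)).mk' (FreeMonoid.of x)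

/-- The defining relations of the structure group, as elements of the free group. -/
def ybGRels {X : Type*} (S : X × X → X × X) : Set (FreeGroup X) :=
  {w | ∃ x y : X, w = FreeGroup.of x * FreeGroup.of y *
    (FreeGroup.of (S (x, y)).1 * FreeGroup.of (S (x, y)).2)⁻¹}

/-- The structure group of `(X,S)`: the group presented by generating set `X` and
relations `x·y = t·z` for each `x,y,t,z` with `S(x,y) = (t,z)`. -/
abbrev StructureGroup {X : Type*} (S : X × X → X × X) : Type _ :=
  PresentedGroup (ybGRels S)

/-- `a` left-divides `b`. -/
def LDvd {M : Type*} [Monoid M] (a b : M) : Prop := ∃ c, b = a * c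

/-- `m` is a right lcm of the family `a`: each `a i` left-divides `m`, and `m`
left-divides every common right multiple of the `a i`. -/
def IsRightLcm {M : Type*} [Monoid M] {ι : Sort*} (a : ι → M) (m : M) : Prop :=
  (∀ i, LDvd (a i) m) ∧ ∀ w, (∀ i, LDvd (a i) w) → LDvd m w

/-- The defining relations of the structure group of the permutation solution
`S(x,y) = (g(y), f(x))`: `x·y = g(y)·f(x)` for all `x, y ∈ X`. -/
def permRels {X : Type*} (f g : X → X) : Set (FreeGroup X) :=
  {w | ∃ x y : X, w = FreeGroup.of x * FreeGroup.of y *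
    (FreeGroup.of (g y) * FreeGroup.of (f x))⁻¹}

/-- The relation `x ≡ x′` iff `(f ∘ g)^[k] x = x′` for some `k ≥ 0`. -/
def pgRel {X : Type*} (f g : X → X) : X → X → Prop :=
  fun a b => ∃ k : ℕ, (f ∘ g)^[k] a = b


/-- The defining relations of the structure group of the induced permutation solution on
`X/≡`: `[x]·[y] = [g(y)]·[f(x)]`. -/
def permRelsQ {X : Type*} (f g : X → X) : Set (FreeGroup (Quot (pgRel f g))) :=
  {w | ∃ x y : X, w =
    FreeGroup.of (Quot.mk (pgRel f g) x) * FreeGroup.of (Quot.mk (pgRel f g) y) *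
    (FreeGroup.of (Quot.mk (pgRel f g) (g y)) *
      FreeGroup.of (Quot.mk (pgRel f g) (f x)))⁻¹}

section Aux

variable {X : Type*} (f g : X → X)

lemma rel_eq_of_mem {rels : Set (FreeGroup X)} {a b : FreeGroup X}
    (h : a * b⁻¹ ∈ rels) :
    (PresentedGroup.mk rels a : PresentedGroup rels) = PresentedGroup.mk rels b := by
  have h1 : (PresentedGroup.mk rels (a * b⁻¹) : PresentedGroup rels) = 1 :=
    (QuotientGroup.eq_one_iff _).mpr (Subgroup.subset_normalClosure h)
  rw [map_mul, map_inv] at h1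
  exact mul_inv_eq_one.mp h1

lemma perm_rel (x y : X) :
    (PresentedGroup.of x : PresentedGroup (permRels f g)) * PresentedGroup.of y =
      PresentedGroup.of (g y) * PresentedGroup.of (f x) := by
  have := rel_eq_of_mem (rels := permRels f g)
    (a := FreeGroup.of x * FreeGroup.of y)
    (b := FreeGroup.of (g y) * FreeGroup.of (f x)) ⟨x, y, rfl⟩
  simp only [map_mul] at this; exact this

lemma permQ_rel (x y : X) :
    (PresentedGroup.of (Quot.mk (pgRel f g) x) : PresentedGroup (permRelsQ f g)) *
        PresentedGroup.of (Quot.mk (pgRel f g) y) =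
      PresentedGroup.of (Quot.mk (pgRel f g) (g y)) *
        PresentedGroup.of (Quot.mk (pgRel f g) (f x)) := by
  have := rel_eq_of_mem (rels := permRelsQ f g)
    (a := FreeGroup.of (Quot.mk (pgRel f g) x) * FreeGroup.of (Quot.mk (pgRel f g) y))
    (b := FreeGroup.of (Quot.mk (pgRel f g) (g y)) *
      FreeGroup.of (Quot.mk (pgRel f g) (f x))) ⟨x, y, rfl⟩
  simp only [map_mul] at this; exact this

lemma of_fg (b : X) :
    (PresentedGroup.of (f (g b)) : PresentedGroup (permRels f g)) = PresentedGroup.of b := by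
  have h := perm_rel f g (g b) b
  exact (mul_left_cancel h).symm

lemma of_iter (k : ℕ) (b : X) :
    (PresentedGroup.of ((f ∘ g)^[k] b) : PresentedGroup (permRels f g)) =
      PresentedGroup.of b := by
  induction k with
  | zero => rfl
  | succ n ih =>
      rw [Function.iterate_succ_apply']
      exact (of_fg f g ((f ∘ g)^[n] b)).trans ih

end Aux

/-- The structure group of a (not necessarily involutive) permutation solution is
isomorphic to the structure group of the induced involutive permutation solution on
`X/≡`, via the quotient map on generators. -/
theorem stmt18 {X : Type*} [Finite X] (f g : X → X)
    (hf : Function.Bijective f) (hg : Function.Bijective g) (hc : f ∘ g = g ∘ f) :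
    ∃ Φ : PresentedGroup (permRels f g) ≃* PresentedGroup (permRelsQ f g),
      ∀ x : X, Φ (PresentedGroup.of x) = PresentedGroup.of (Quot.mk (pgRel f g) x) := by
  classical
  -- forward map on generators
  set φ0 : X → PresentedGroup (permRelsQ f g) :=
    fun x => PresentedGroup.of (Quot.mk (pgRel f g) x) with hφ0
  have hφ : ∀ r ∈ permRels f g, FreeGroup.lift φ0 r = 1 := by
    rintro r ⟨x, y, rfl⟩
    simp only [map_mul, map_inv, FreeGroup.lift_apply_of, hφ0]
    rw [mul_inv_eq_one]
    exact permQ_rel f g x y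
  -- backward map on generators
  set ψ0 : Quot (pgRel f g) → PresentedGroup (permRels f g) :=
    Quot.lift (fun x => PresentedGroup.of x)
      (by rintro a b ⟨k, rfl⟩; exact (of_iter f g k a).symm) with hψ0
  have hψ0mk : ∀ x : X, ψ0 (Quot.mk (pgRel f g) x) = PresentedGroup.of x := fun _ => rfl
  have hψ : ∀ r ∈ permRelsQ f g, FreeGroup.lift ψ0 r = 1 := by
    rintro r ⟨x, y, rfl⟩
    simp only [map_mul, map_inv, FreeGroup.lift_apply_of, hψ0mk]
    rw [mul_inv_eq_one]
    exact perm_rel f g x y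
  let Φ : PresentedGroup (permRels f g) →* PresentedGroup (permRelsQ f g) :=
    PresentedGroup.toGroup hφ
  let Ψ : PresentedGroup (permRelsQ f g) →* PresentedGroup (permRels f g) :=
    PresentedGroup.toGroup hψ
  have hΦof : ∀ x : X, Φ (PresentedGroup.of x) = φ0 x := fun x => PresentedGroup.toGroup.of hφ
  have hΨof : ∀ q, Ψ (PresentedGroup.of q) = ψ0 q := fun q => PresentedGroup.toGroup.of hψ
  have h1 : Ψ.comp Φ = MonoidHom.id _ := by
    apply PresentedGroup.ext
    intro x
    simp only [MonoidHom.comp_apply, MonoidHom.id_apply, hΦof, hφ0, hΨof, hψ0mk]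
  have h2 : Φ.comp Ψ = MonoidHom.id _ := by
    apply PresentedGroup.ext
    intro q
    induction q using Quot.ind with
    | _ x =>
      simp only [MonoidHom.comp_apply, MonoidHom.id_apply, hΨof, hψ0mk, hΦof, hφ0]
  exact ⟨MonoidHom.toMulEquiv Φ Ψ h1 h2, fun x => hΦof x⟩
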